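/- Let (X,T) be the Bratteli-Vershik system of the following ordered Bratteli diagram: for each n >= 1, level n has q_n >= 2 vertices enumerated v(n,1), ..., v(n,q_n); there is exactly one edge from the root to each vertex of level 1, and exactly one edge from every vertex at level n to every vertex at level n+1; and the edges into each vertex at level n+1 are ordered according to the index i of their source v(n,i). This diagram is simple and properly ordered, and the system (X,T) satisfies: for every k >= 1 there exists a depth k pair of paths with a (k+1) cut, while no depth k pair of paths has a (k+2) cut; in particular (X,T) is untimed but not very untimed. -/

import Mathlib

set_option autoImplicit false

/-- An ordered Bratteli diagram: finite nonempty vertex sets `V n`, a single root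
vertex at level `0`, finite edge sets `E n` (edges from level `n` to level `n+1`,
multiple edges allowed), every vertex has an outgoing edge, every non-root vertex
an incoming edge, and the edges into each vertex carry a linear order, encoded by
the relation `elt` which relates only edges with the same target. -/
structure BDiagram where
  V : ℕ → Type
  E : ℕ → Type
  fintV : ∀ n, Fintype (V n)
  fintE : ∀ n, Fintype (E n)
  nonV : ∀ n, Nonempty (V n)
  rootSubsingleton : Subsingleton (V 0)
  src : ∀ {n}, E n → V n
  tgt : ∀ {n}, E n → V (n + 1)
  hasOut : ∀ (n : ℕ) (v : V n), ∃ e : E n, src e = v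
  hasIn : ∀ (n : ℕ) (v : V (n + 1)), ∃ e : E n, tgt e = v
  elt : ∀ {n}, E n → E n → Prop
  elt_tgt : ∀ (n : ℕ) (e f : E n), elt e f → tgt e = tgt f
  elt_irrefl : ∀ (n : ℕ) (e : E n), ¬ elt e e
  elt_trans : ∀ (n : ℕ) (e f g : E n), elt e f → elt f g → elt e g
  elt_total : ∀ (n : ℕ) (e f : E n), tgt e = tgt f → e ≠ f → elt e f ∨ elt f e

namespace BDiagram

variable (B : BDiagram)

def castV {m n : ℕ} (h : m = n) (v : B.V m) : B.V n := h ▸ v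

/-- An edge is minimal if no edge (into the same target) is below it. -/
def IsMinEdge {n : ℕ} (e : B.E n) : Prop := ∀ e' : B.E n, ¬ B.elt e' e

/-- An edge is maximal if no edge (into the same target) is above it. -/
def IsMaxEdge {n : ℕ} (e : B.E n) : Prop := ∀ e' : B.E n, ¬ B.elt e e'

/-- The space of infinite paths from the root. -/
def PathSpace : Type := { x : ∀ n, B.E n // ∀ n, B.tgt (x n) = B.src (x (n + 1)) }

def IsMinPath (x : B.PathSpace) : Prop := ∀ n, B.IsMinEdge (x.1 n)

def IsMaxPath (x : B.PathSpace) : Prop := ∀ n, B.IsMaxEdge (x.1 n)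

/-- Properly ordered: unique minimal and unique maximal path. -/
def ProperlyOrdered : Prop :=
  (∃! x : B.PathSpace, B.IsMinPath x) ∧ (∃! x : B.PathSpace, B.IsMaxPath x)

/-- The partial order on cofinal paths: `x < y` iff they eventually agree and at the
last disagreement the edge of `x` is below the edge of `y`. -/
def pathLT (x y : B.PathSpace) : Prop :=
  ∃ N : ℕ, B.elt (x.1 N) (y.1 N) ∧ ∀ n : ℕ, N < n → x.1 n = y.1 n

/-- `T` is the Vershik map: each non-maximal path goes to its successor, and each
maximal path goes to a minimal path. -/
def IsVershik (T : B.PathSpace ≃ B.PathSpace) : Prop :=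
  (∀ x : B.PathSpace, ¬ B.IsMaxPath x →
    B.pathLT x (T x) ∧ ∀ z : B.PathSpace, B.pathLT x z → ¬ B.pathLT z (T x)) ∧
  (∀ x : B.PathSpace, B.IsMaxPath x → B.IsMinPath (T x))

/-- `f` is a chain of consecutive edges on levels `[a, b)`. -/
def SegOn (f : ∀ i, B.E i) (a b : ℕ) : Prop :=
  ∀ i : ℕ, a ≤ i → i + 1 < b → B.tgt (f i) = B.src (f (i + 1))

/-- Simplicity: some telescoping has complete connections between adjacent levels. -/
def Simple : Prop :=
  ∃ ns : ℕ → ℕ, StrictMono ns ∧ ns 0 = 0 ∧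
    ∀ (l c : ℕ), ns (l + 1) = c + 1 →
      ∀ (v : B.V (ns l)) (w : B.V (c + 1)),
        ∃ f : ∀ i, B.E i, B.SegOn f (ns l) (c + 1) ∧ B.src (f (ns l)) = v ∧ B.tgt (f c) = w

/-- The natural (Cantor) topology on the path space, induced from the product of
the discrete topologies on the edge sets. -/
def pathTop : TopologicalSpace B.PathSpace :=
  TopologicalSpace.induced Subtype.val (@Pi.topologicalSpace ℕ B.E (fun _ => ⊥))

/-- Integer iterates of a bijection of the path space. -/
def iterZ (T : B.PathSpace ≃ B.PathSpace) (m : ℤ) : B.PathSpace ≃ B.PathSpace :=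
  (T : Equiv.Perm B.PathSpace) ^ m

/-- Two paths have the same `k`-coding: for every time `m` the initial segments of
`T^m x` and `T^m y` from the root to level `k` coincide. -/
def SameCoding (T : B.PathSpace ≃ B.PathSpace) (k : ℕ) (x y : B.PathSpace) : Prop :=
  ∀ (m : ℤ) (i : ℕ), i < k → ((B.iterZ T m) x).1 i = ((B.iterZ T m) y).1 i

/-- A depth `k` pair: distinct paths with the same `k`-coding but not the same
`(k+1)`-coding. -/
def DepthPair (T : B.PathSpace ≃ B.PathSpace) (k : ℕ) (x y : B.PathSpace) : Prop :=
  x ≠ y ∧ B.SameCoding T k x y ∧ ¬ B.SameCoding T (k + 1) x y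

/-- The pair `x, y` has a `j` cut: for some time `m`, both `T^m x` and `T^m y` are
minimal from the root into level `j`. -/
def HasCut (T : B.PathSpace ≃ B.PathSpace) (j : ℕ) (x y : B.PathSpace) : Prop :=
  ∃ m : ℤ, (∀ i : ℕ, i < j → B.IsMinEdge (((B.iterZ T m) x).1 i)) ∧
    (∀ i : ℕ, i < j → B.IsMinEdge (((B.iterZ T m) y).1 i))

/-- Nonexpansive: for every `k ≥ 1` there are two distinct paths with the same
`k`-coding. -/
def Nonexpansive (T : B.PathSpace ≃ B.PathSpace) : Prop :=
  ∀ k : ℕ, 1 ≤ k → ∃ x y : B.PathSpace, x ≠ y ∧ B.SameCoding T k x y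

/-- Well timed: for every `k ≥ 1` and every `j > k` there is a depth `k` pair with
a `j` cut. -/
def WellTimed (T : B.PathSpace ≃ B.PathSpace) : Prop :=
  ∀ k : ℕ, 1 ≤ k → ∀ j : ℕ, k < j →
    ∃ x y : B.PathSpace, B.DepthPair T k x y ∧ B.HasCut T j x y

/-- Very well timed: for every `k ≥ 1` there is a depth `k` pair having a `j` cut
for every `j > k`. -/
def VeryWellTimed (T : B.PathSpace ≃ B.PathSpace) : Prop :=
  ∀ k : ℕ, 1 ≤ k →
    ∃ x y : B.PathSpace, B.DepthPair T k x y ∧ ∀ j : ℕ, k < j → B.HasCut T j x y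

/-- Weakly well timed: for infinitely many `k ≥ 1`, for every `j > k` there is a
depth `k` pair with a `j` cut. -/
def WeaklyWellTimed (T : B.PathSpace ≃ B.PathSpace) : Prop :=
  ∀ K : ℕ, ∃ k : ℕ, K ≤ k ∧ 1 ≤ k ∧ ∀ j : ℕ, k < j →
    ∃ x y : B.PathSpace, B.DepthPair T k x y ∧ B.HasCut T j x y

/-- Untimed: for every `k ≥ 1` there is a `j > k` such that no depth `k` pair has a
`j` cut. -/
def Untimed (T : B.PathSpace ≃ B.PathSpace) : Prop :=
  ∀ k : ℕ, 1 ≤ k → ∃ j : ℕ, k < j ∧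
    ∀ x y : B.PathSpace, B.DepthPair T k x y → ¬ B.HasCut T j x y

/-- Very untimed: for every `k ≥ 1`, no depth `k` pair has a `(k+1)` cut. -/
def VeryUntimed (T : B.PathSpace ≃ B.PathSpace) : Prop :=
  ∀ k : ℕ, 1 ≤ k →
    ∀ x y : B.PathSpace, B.DepthPair T k x y → ¬ B.HasCut T (k + 1) x y

/-- Finite paths from the root to level `n`. -/
def FinPath (n : ℕ) : Type :=
  { f : (i : Fin n) → B.E i.val //
    ∀ (i : ℕ) (h : i + 1 < n), B.tgt (f ⟨i, by omega⟩) = B.src (f ⟨i + 1, h⟩) }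

/-- The lexicographic (from the end) order on finite paths to level `n` induced by
the orders on the edges. -/
def finLT {n : ℕ} (p q : B.FinPath n) : Prop :=
  ∃ (N : ℕ) (h : N < n), B.elt (p.1 ⟨N, h⟩) (q.1 ⟨N, h⟩) ∧
    ∀ (i : ℕ) (hi : i < n), N < i → p.1 ⟨i, hi⟩ = q.1 ⟨i, hi⟩

/-- The finite path `p` to level `n` ends at the vertex `v`. -/
def EndsAt {n : ℕ} (p : B.FinPath n) (v : B.V n) : Prop :=
  ∀ (m : ℕ) (h : n = m + 1), B.tgt (p.1 ⟨m, by omega⟩) = B.castV h v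

/-- The initial segment of an infinite path, from the root to level `n`. -/
def pathInit (x : B.PathSpace) (n : ℕ) : B.FinPath n :=
  ⟨fun i => x.1 i.val, fun i _ => x.2 i⟩

/-- The vertex of an infinite path at level `n`. -/
def pathVert (x : B.PathSpace) (n : ℕ) : B.V n := B.src (x.1 n)

theorem pathInit_endsAt (x : B.PathSpace) (n : ℕ) :
    B.EndsAt (B.pathInit x n) (B.pathVert x n) := by
  intro m h
  subst h
  exact x.2 m

/-- Truncation of a finite path to a lower level. -/
def truncTo {n : ℕ} (k : ℕ) (hk : k ≤ n) (p : B.FinPath n) : B.FinPath k :=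
  ⟨fun i => p.1 ⟨i.val, by omega⟩, fun i h => p.2 i (by omega)⟩

/-- Paths `x, x'` are `k`-equivalent at level `n`: there is an order isomorphism
between the sets of finite paths from the root into their level-`n` vertices which
preserves truncations to level `k` (equality of `k`-basic blocks) and which matches
the initial segment of `x` with the initial segment of `x'` (the "dot" is in the
same place). -/
def KEquivAt (k n : ℕ) (x x' : B.PathSpace) : Prop :=
  ∃ φ : { p : B.FinPath n // B.EndsAt p (B.pathVert x n) } ≃
      { p : B.FinPath n // B.EndsAt p (B.pathVert x' n) },
    (∀ p q, B.finLT p.1 q.1 ↔ B.finLT (φ p).1 (φ q).1) ∧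
    (∀ p (i : ℕ) (hik : i < k) (hin : i < n), ((φ p).1).1 ⟨i, hin⟩ = (p.1).1 ⟨i, hin⟩) ∧
    φ ⟨B.pathInit x n, B.pathInit_endsAt x n⟩ = ⟨B.pathInit x' n, B.pathInit_endsAt x' n⟩

/-- Paths are `k`-equivalent: they agree from the root to level `k` and are
`k`-equivalent at every level `n > k`. -/
def KEquivPaths (k : ℕ) (x x' : B.PathSpace) : Prop :=
  (∀ i : ℕ, i < k → x.1 i = x'.1 i) ∧ ∀ n : ℕ, k < n → B.KEquivAt k n x x'

/-- Standard nonexpansive: for every `k ≥ 1` there is a pair of distinct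
`k`-equivalent paths. -/
def SNE : Prop := ∀ k : ℕ, 1 ≤ k → ∃ x x' : B.PathSpace, x ≠ x' ∧ B.KEquivPaths k x x'

/-!  ### Telescoping  -/

theorem castV_eq_of_heq {m n : ℕ} (h : m = n) {v : B.V m} {w : B.V n} (hw : HEq v w) :
    B.castV h v = w := by
  subst h
  exact eq_of_heq hw

theorem castV_heq {m n : ℕ} (h : m = n) (v : B.V m) : HEq (B.castV h v) v := by
  subst h
  rfl

theorem castV_inj {m n : ℕ} (h : m = n) {v w : B.V m}
    (hvw : B.castV h v = B.castV h w) : v = w := by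
  subst h
  exact hvw

def castE {m n : ℕ} (h : m = n) (e : B.E m) : B.E n := h ▸ e

noncomputable def chainFrom (a : ℕ) (v : B.V a) : (i : ℕ) → B.E (a + i)
  | 0 => (B.hasOut a v).choose
  | i + 1 => (B.hasOut (a + i + 1) (B.tgt (chainFrom a v i))).choose

theorem chainFrom_src_zero (a : ℕ) (v : B.V a) : B.src (B.chainFrom a v 0) = v :=
  (B.hasOut a v).choose_spec

theorem chainFrom_src_succ (a : ℕ) (v : B.V a) (i : ℕ) :
    B.src (B.chainFrom a v (i + 1)) = B.tgt (B.chainFrom a v i) :=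
  (B.hasOut (a + i + 1) (B.tgt (B.chainFrom a v i))).choose_spec

noncomputable def chainTo (a : ℕ) : (j : ℕ) → (w : B.V (a + j + 1)) → (i : ℕ) → i ≤ j → B.E (a + i)
  | 0, w, i, _ => B.castE (by omega : a + 0 = a + i) (B.hasIn a w).choose
  | j + 1, w, i, _ =>
      if h : i ≤ j then chainTo a j (B.src (B.hasIn (a + j + 1) w).choose) i h
      else B.castE (by omega : a + (j + 1) = a + i) (B.hasIn (a + j + 1) w).choose

theorem chainTo_tgt_last (a : ℕ) : ∀ (j : ℕ) (w : B.V (a + j + 1)),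
    B.tgt (B.chainTo a j w j le_rfl) = w := by
  intro j w
  cases j with
  | zero =>
      simp only [chainTo]
      exact (B.hasIn a w).choose_spec
  | succ j =>
      simp only [chainTo]
      rw [dif_neg (by omega : ¬ j + 1 ≤ j)]
      exact (B.hasIn (a + j + 1) w).choose_spec

theorem chainTo_chain (a : ℕ) : ∀ (j : ℕ) (w : B.V (a + j + 1)) (i : ℕ) (h : i + 1 ≤ j)
    (h' : i ≤ j), B.tgt (B.chainTo a j w i h') = B.src (B.chainTo a j w (i + 1) h) := by
  intro j
  induction j with
  | zero => intro w i h h'; omega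
  | succ j ih =>
      intro w i h h'
      by_cases hij : i + 1 ≤ j
      · simp only [chainTo]
        rw [dif_pos (by omega : i ≤ j), dif_pos hij]
        exact ih _ i hij (by omega)
      · have hi : i = j := by omega
        subst hi
        simp only [chainTo]
        rw [dif_pos (le_refl i), dif_neg (by omega : ¬ i + 1 ≤ i)]
        exact B.chainTo_tgt_last a i _


def TelE (a b : ℕ) : Type :=
  { f : (i : Fin (b - a)) → B.E (a + i.val) //
    ∀ (i : ℕ) (h : i + 1 < b - a), B.tgt (f ⟨i, by omega⟩) = B.src (f ⟨i + 1, h⟩) }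

def telSrc {a b : ℕ} (hab : a < b) (f : B.TelE a b) : B.V a :=
  B.src (f.1 ⟨0, by omega⟩)

def telTgt {a b : ℕ} (hab : a < b) (f : B.TelE a b) : B.V b :=
  B.castV (by omega : a + (b - a - 1) + 1 = b) (B.tgt (f.1 ⟨b - a - 1, by omega⟩))

def telLT {a b : ℕ} (f g : B.TelE a b) : Prop :=
  ∃ (N : ℕ) (h : N < b - a), B.elt (f.1 ⟨N, h⟩) (g.1 ⟨N, h⟩) ∧
    ∀ (i : ℕ) (hi : i < b - a), N < i → f.1 ⟨i, hi⟩ = g.1 ⟨i, hi⟩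

noncomputable def Telescope (ns : ℕ → ℕ) (hmono : StrictMono ns) (h0 : ns 0 = 0) : BDiagram where
  V l := B.V (ns l)
  E l := B.TelE (ns l) (ns (l + 1))
  fintV l := B.fintV (ns l)
  fintE l := by
    classical
    letI : ∀ i : Fin (ns (l + 1) - ns l), Fintype (B.E (ns l + i.val)) := fun i => B.fintE _
    exact Subtype.fintype _
  nonV l := B.nonV (ns l)
  rootSubsingleton := by show Subsingleton (B.V (ns 0)); rw [h0]; exact B.rootSubsingleton
  src {l} f := B.telSrc (hmono (Nat.lt_succ_self l)) f
  tgt {l} f := B.telTgt (hmono (Nat.lt_succ_self l)) f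
  hasOut := by
    intro l v
    refine ⟨⟨fun i => B.chainFrom (ns l) v i.val,
      fun i h => (B.chainFrom_src_succ (ns l) v i).symm⟩, ?_⟩
    exact B.chainFrom_src_zero (ns l) v
  hasIn := by
    intro l w
    have hab : ns l < ns (l + 1) := hmono (Nat.lt_succ_self l)
    have hj : ns l + (ns (l + 1) - ns l - 1) + 1 = ns (l + 1) := by omega
    refine ⟨⟨fun i => B.chainTo (ns l) (ns (l + 1) - ns l - 1) (B.castV hj.symm w) i.val
        (by omega), fun i h => B.chainTo_chain _ _ _ i (by omega) (by omega)⟩, ?_⟩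
    show B.castV (by omega) (B.tgt (B.chainTo (ns l) (ns (l + 1) - ns l - 1)
      (B.castV hj.symm w) (ns (l + 1) - ns l - 1) (by omega))) = w
    rw [B.chainTo_tgt_last]
    exact B.castV_eq_of_heq _ (B.castV_heq _ w)
  elt {l} f g := B.telLT f g
  elt_tgt := by
    rintro l f g ⟨N, hN, hlt, hgt⟩
    show B.telTgt _ f = B.telTgt _ g
    unfold telTgt
    refine congrArg (B.castV _) ?_
    rcases eq_or_lt_of_le (show N ≤ ns (l + 1) - ns l - 1 by omega) with h | h
    · subst h
      exact B.elt_tgt _ _ _ hlt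
    · exact congrArg B.tgt (hgt _ (by omega) h)
  elt_irrefl := by
    rintro l f ⟨N, h, hlt, -⟩
    exact B.elt_irrefl _ _ hlt
  elt_trans := by
    rintro l f g h ⟨N₁, hN₁, hlt₁, hgt₁⟩ ⟨N₂, hN₂, hlt₂, hgt₂⟩
    rcases lt_trichotomy N₁ N₂ with hc | hc | hc
    · exact ⟨N₂, hN₂, by rw [hgt₁ N₂ hN₂ hc]; exact hlt₂,
        fun i hi hN => (hgt₁ i hi (by omega)).trans (hgt₂ i hi hN)⟩
    · subst hc
      exact ⟨N₁, hN₁, B.elt_trans _ _ _ _ hlt₁ hlt₂,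
        fun i hi hN => (hgt₁ i hi hN).trans (hgt₂ i hi hN)⟩
    · refine ⟨N₁, hN₁, ?_, fun i hi hN => (hgt₁ i hi hN).trans (hgt₂ i hi (by omega))⟩
      rw [← hgt₂ N₁ hN₁ hc]
      exact hlt₁
  elt_total := by
    intro l f g htgt hne
    classical
    have hab : ns l < ns (l + 1) := hmono (Nat.lt_succ_self l)
    set b := ns (l + 1) - ns l with hb
    have hex : ∃ N, ∃ h : N < b, f.1 ⟨N, h⟩ ≠ g.1 ⟨N, h⟩ := by
      by_contra hco
      push_neg at hco
      exact hne (Subtype.ext (funext fun i => hco i.val i.isLt))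
    set P : ℕ → Prop := fun N => ∃ h : N < b, f.1 ⟨N, h⟩ ≠ g.1 ⟨N, h⟩ with hP
    obtain ⟨N₀, hN₀⟩ := hex
    set N := Nat.findGreatest P b with hNdef
    have hPN : P N := Nat.findGreatest_spec (le_of_lt hN₀.choose) hN₀
    have hafter : ∀ i (hi : i < b), N < i → f.1 ⟨i, hi⟩ = g.1 ⟨i, hi⟩ := by
      intro i hi hNi
      by_contra hcon
      exact Nat.findGreatest_is_greatest hNi (le_of_lt hi) ⟨hi, hcon⟩
    clear_value N
    obtain ⟨hNb, hNne⟩ := hPN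
    have htgtN : B.tgt (f.1 ⟨N, hNb⟩) = B.tgt (g.1 ⟨N, hNb⟩) := by
      rcases eq_or_lt_of_le (show N ≤ b - 1 by omega) with h | h
      · -- N is the last index; use equality of targets of the composite edges
        subst h
        exact B.castV_inj _ htgt
      · have h2 : f.1 ⟨N + 1, by omega⟩ = g.1 ⟨N + 1, by omega⟩ :=
          hafter (N + 1) (by omega) (by omega)
        rw [f.2 N (by omega), g.2 N (by omega), h2]
    rcases B.elt_total _ _ _ htgtN hNne with h | h
    · exact Or.inl ⟨N, hNb, h, hafter⟩
    · exact Or.inr ⟨N, hNb, h, fun i hi hN => (hafter i hi hN).symm⟩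

def teleMap (ns : ℕ → ℕ) (hmono : StrictMono ns) (h0 : ns 0 = 0) (x : B.PathSpace) :
    (B.Telescope ns hmono h0).PathSpace :=
  ⟨fun l => ⟨fun i => x.1 (ns l + i.val), fun i _ => x.2 (ns l + i)⟩, fun l => by
    have hab : ns l < ns (l + 1) := hmono (Nat.lt_succ_self l)
    have hm : ns l + (ns (l + 1) - ns l - 1) + 1 = ns (l + 1) := by omega
    show B.castV _ (B.tgt (x.1 (ns l + (ns (l + 1) - ns l - 1)))) = B.src (x.1 (ns (l + 1) + 0))
    rw [x.2 (ns l + (ns (l + 1) - ns l - 1))]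
    exact B.castV_eq_of_heq _ (by rw [hm]; exact HEq.rfl)⟩


/-- Level `n+1` is uniformly ordered: there is a single nonempty block `P` of paths
from the root to level `n` such that the `n`-basic block at every vertex at level
`n+1` is a positive power of `P`. -/
def UniformlyOrderedLevel (n : ℕ) : Prop :=
  ∃ (p : ℕ) (hp : 0 < p) (P : Fin p → B.FinPath n),
    ∀ v : B.V (n + 1), ∃ (m : ℕ), 0 < m ∧
      ∃ enum : Fin (m * p) ≃ { q : B.FinPath (n + 1) // B.EndsAt q v },
        (∀ i j : Fin (m * p), i < j ↔ B.finLT (enum i).1 (enum j).1) ∧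
        (∀ i : Fin (m * p),
          B.truncTo n (Nat.le_succ n) (enum i).1 = P ⟨i.val % p, Nat.mod_lt _ hp⟩)

/-- The ordinal label of an edge: its position in the linear order on the edges
into its target. -/
noncomputable def edgeLabel {n : ℕ} (e : B.E n) : ℕ := Nat.card { e' : B.E n // B.elt e' e }

/-- Deterministic: for every `n ≥ 1`, distinct edges with the same source at level
`n` have different ordinal labels. -/
def Deterministic : Prop :=
  ∀ n : ℕ, 1 ≤ n → ∀ e f : B.E n, B.src e = B.src f → e ≠ f →
    B.edgeLabel e ≠ B.edgeLabel f

end BDiagram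

/-- A Bratteli–Vershik system: a simple, properly ordered ordered Bratteli diagram
together with its Vershik map. -/
structure BVSystem where
  B : BDiagram
  T : B.PathSpace ≃ B.PathSpace
  proper : B.ProperlyOrdered
  simple : B.Simple
  vershik : B.IsVershik T

/-- Conjugacy of systems: an equivariant homeomorphism of the path spaces taking
minimal paths to minimal paths. -/
def Conjugate (S S' : BVSystem) : Prop :=
  ∃ φ : S.B.PathSpace ≃ S'.B.PathSpace,
    (@Continuous _ _ S.B.pathTop S'.B.pathTop φ) ∧
    (@Continuous _ _ S'.B.pathTop S.B.pathTop φ.symm) ∧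
    (∀ x, φ (S.T x) = S'.T (φ x)) ∧
    (∀ x, S.B.IsMinPath x → S'.B.IsMinPath (φ x))

/-- An odometer: a system whose diagram has exactly one vertex at every level. -/
def IsOdometer (S : BVSystem) : Prop := ∀ n, Subsingleton (S.B.V n)

/-- Vertex sets of the example diagram: one root, and `q n ≥ 2` vertices at each
level `n ≥ 1`, enumerated by `Fin (q n)`. -/
def exV (q : ℕ → ℕ) : ℕ → Type
  | 0 => Fin 1
  | n + 1 => Fin (q (n + 1))

/-- The index of a vertex in its level's enumeration. -/
def exVIdx (q : ℕ → ℕ) : ∀ {n : ℕ}, exV q n → ℕ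
  | 0, v => v.val
  | _ + 1, v => v.val

theorem exVIdx_inj (q : ℕ → ℕ) : ∀ {n : ℕ} (v w : exV q n),
    exVIdx q v = exVIdx q w → v = w := by
  intro n v w h
  cases n <;> exact Fin.ext h

/-- The example diagram: exactly one edge from every vertex at each level to every
vertex at the next level, with the edges into each vertex ordered according to the
index of their source. -/
def exDiagram (q : ℕ → ℕ) (hq : ∀ n : ℕ, 1 ≤ n → 2 ≤ q n) : BDiagram where
  V := exV q
  E n := exV q n × exV q (n + 1)
  fintV n := by
    cases n with
    | zero => exact (inferInstance : Fintype (Fin 1))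
    | succ m => exact (inferInstance : Fintype (Fin (q (m + 1))))
  fintE n := by
    cases n with
    | zero => exact (inferInstance : Fintype (Fin 1 × Fin (q 1)))
    | succ m => exact (inferInstance : Fintype (Fin (q (m + 1)) × Fin (q (m + 2))))
  nonV n := by
    cases n with
    | zero => exact ⟨(0 : Fin 1)⟩
    | succ m => exact ⟨(⟨0, by have := hq (m + 1) (by omega); omega⟩ : Fin (q (m + 1)))⟩
  rootSubsingleton := ⟨fun a b => Fin.ext (by omega)⟩
  src e := e.1
  tgt e := e.2
  hasOut n v :=
    ⟨(v, (⟨0, by have := hq (n + 1) (by omega); omega⟩ : Fin (q (n + 1)))), rfl⟩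
  hasIn n v := by
    cases n with
    | zero => exact ⟨((0 : Fin 1), v), rfl⟩
    | succ m =>
        exact ⟨((⟨0, by have := hq (m + 1) (by omega); omega⟩ : Fin (q (m + 1))), v), rfl⟩
  elt e f := e.2 = f.2 ∧ exVIdx q e.1 < exVIdx q f.1
  elt_tgt := fun n e f h => h.1
  elt_irrefl := fun n e h => lt_irrefl _ h.2
  elt_trans := fun n e f g h1 h2 => ⟨h1.1.trans h2.1, h1.2.trans h2.2⟩
  elt_total := by
    intro n e f htgt hne
    have h1 : e.1 ≠ f.1 := by
      intro h
      exact hne (Prod.ext h htgt)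
    have h2 : exVIdx q e.1 ≠ exVIdx q f.1 := fun h => h1 (exVIdx_inj q _ _ h)
    rcases lt_or_gt_of_ne h2 with h | h
    · exact Or.inl ⟨htgt, h⟩
    · exact Or.inr ⟨htgt.symm, h⟩

set_option linter.unusedVariables false
set_option maxHeartbeats 1000000

namespace ExProof

variable (q : ℕ → ℕ) (hq : ∀ n : ℕ, 1 ≤ n → 2 ≤ q n)

/-- digit of a path at level n: index of its vertex at level n. -/
def dg (x : (exDiagram q hq).PathSpace) (n : ℕ) : ℕ := exVIdx q ((x.1 n).1)

theorem dg_zero (x : (exDiagram q hq).PathSpace) : dg q hq x 0 = 0 := by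
  show exVIdx q ((x.1 0).1) = 0
  have : ((x.1 0).1 : Fin 1).val = 0 := by omega
  exact this

theorem dg_lt (x : (exDiagram q hq).PathSpace) (n : ℕ) : dg q hq x (n + 1) < q (n + 1) := by
  show ((x.1 (n+1)).1 : Fin (q (n+1))).val < q (n+1)
  exact ((x.1 (n+1)).1).isLt

theorem dg_snd (x : (exDiagram q hq).PathSpace) (n : ℕ) :
    dg q hq x (n + 1) = exVIdx q ((x.1 n).2) := by
  unfold dg
  have h := x.2 n
  rw [show (exDiagram q hq).tgt (x.1 n) = (x.1 n).2 from rfl,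
    show (exDiagram q hq).src (x.1 (n+1)) = (x.1 (n+1)).1 from rfl] at h
  rw [h]

/-- vertex with a given index (mod the level size). -/
def mkV (n : ℕ) (i : ℕ) : exV q n :=
  match n with
  | 0 => (0 : Fin 1)
  | m + 1 => (⟨i % q (m + 1), Nat.mod_lt _ (by have := hq (m+1) (by omega); omega)⟩ : Fin (q (m+1)))

theorem mkV_idx (n i : ℕ) : exVIdx q (mkV q hq n i) = i % (match n with | 0 => 1 | m+1 => q (m+1)) := by
  cases n with
  | zero => simp [mkV, exVIdx]; omega
  | succ m => simp [mkV, exVIdx]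

theorem mkV_idx_succ (n i : ℕ) (h : i < q (n + 1)) :
    exVIdx q (mkV q hq (n + 1) i) = i := by
  rw [mkV_idx]
  exact Nat.mod_eq_of_lt h

theorem mkV_idx_zero (n : ℕ) : exVIdx q (mkV q hq n 0) = 0 := by
  rw [mkV_idx]
  simp

/-- path built from a vertex at each level. -/
def mkPath (f : ∀ n, exV q n) : (exDiagram q hq).PathSpace :=
  ⟨fun n => (f n, f (n + 1)), fun n => rfl⟩

theorem dg_mkPath (f : ∀ n, exV q n) (n : ℕ) :
    dg q hq (mkPath q hq f) n = exVIdx q (f n) := rfl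

theorem path_ext (x y : (exDiagram q hq).PathSpace)
    (h : ∀ n, dg q hq x n = dg q hq y n) : x = y := by
  have hfst : ∀ n, (x.1 n).1 = (y.1 n).1 := fun n => exVIdx_inj q _ _ (h n)
  refine Subtype.ext (funext fun n => ?_)
  have hx := x.2 n
  have hy := y.2 n
  rw [show (exDiagram q hq).tgt (x.1 n) = (x.1 n).2 from rfl,
    show (exDiagram q hq).src (x.1 (n+1)) = (x.1 (n+1)).1 from rfl] at hx
  rw [show (exDiagram q hq).tgt (y.1 n) = (y.1 n).2 from rfl,
    show (exDiagram q hq).src (y.1 (n+1)) = (y.1 (n+1)).1 from rfl] at hy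
  exact Prod.ext (hfst n) (by rw [hx, hy, hfst (n+1)])

variable (q : ℕ → ℕ) (hq : ∀ n : ℕ, 1 ≤ n → 2 ≤ q n)

theorem elt_iff (n : ℕ) (e f : (exDiagram q hq).E n) :
    (exDiagram q hq).elt e f ↔ (e.2 = f.2 ∧ exVIdx q e.1 < exVIdx q f.1) := Iff.rfl

theorem isMinEdge_zero (e : (exDiagram q hq).E 0) : (exDiagram q hq).IsMinEdge e := by
  intro e' he'
  rw [elt_iff] at he'
  have h1 : (e'.1 : Fin 1).val = 0 := by omega
  have h2 : (e.1 : Fin 1).val = 0 := by omega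
  have : exVIdx q e'.1 = 0 := h1
  have h2' : exVIdx q e.1 = 0 := h2
  omega

theorem isMinEdge_iff (n : ℕ) (e : (exDiagram q hq).E (n + 1)) :
    (exDiagram q hq).IsMinEdge e ↔ exVIdx q e.1 = 0 := by
  constructor
  · intro h
    by_contra hne
    exact h (mkV q hq (n+1) 0, e.2) ⟨rfl, by rw [mkV_idx_zero]; omega⟩
  · intro h e' he'
    rw [elt_iff] at he'
    omega

theorem isMaxEdge_iff (n : ℕ) (e : (exDiagram q hq).E (n + 1)) :
    (exDiagram q hq).IsMaxEdge e ↔ exVIdx q e.1 = q (n + 1) - 1 := by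
  have hql := hq (n+1) (by omega)
  have hlt : exVIdx q e.1 < q (n+1) := (e.1 : Fin (q (n+1))).isLt
  constructor
  · intro h
    by_contra hne
    exact h (mkV q hq (n+1) (q (n+1) - 1), e.2)
      ⟨rfl, by rw [mkV_idx_succ q hq n _ (by omega)]; omega⟩
  · intro h e' he'
    rw [elt_iff] at he'
    have : exVIdx q e'.1 < q (n+1) := (e'.1 : Fin (q (n+1))).isLt
    omega

theorem isMinPath_iff (x : (exDiagram q hq).PathSpace) :
    (exDiagram q hq).IsMinPath x ↔ ∀ n, dg q hq x (n + 1) = 0 := by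
  constructor
  · intro h n
    exact (isMinEdge_iff q hq n (x.1 (n+1))).mp (h (n+1))
  · intro h n
    cases n with
    | zero => exact isMinEdge_zero q hq _
    | succ m => exact (isMinEdge_iff q hq m (x.1 (m+1))).mpr (h m)

theorem isMaxPath_iff (x : (exDiagram q hq).PathSpace) :
    (exDiagram q hq).IsMaxPath x ↔ ∀ n, dg q hq x (n + 1) = q (n + 1) - 1 := by
  constructor
  · intro h n
    exact (isMaxEdge_iff q hq n (x.1 (n+1))).mp (h (n+1))
  · intro h n
    cases n with
    | zero =>
        intro e' he'
        rw [elt_iff] at he'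
        have h2 : exVIdx q ((x.1 0).1) = 0 := by
          have : ((x.1 0).1 : Fin 1).val = 0 := by omega
          exact this
        have h3 : exVIdx q (e'.1) = 0 := by
          have : ((e'.1 : Fin 1)).val = 0 := by omega
          exact this
        omega
    | succ m => exact (isMaxEdge_iff q hq m (x.1 (m+1))).mpr (h m)

variable (q : ℕ → ℕ) (hq : ∀ n : ℕ, 1 ≤ n → 2 ≤ q n)

theorem pathLT_iff (x z : (exDiagram q hq).PathSpace) :
    (exDiagram q hq).pathLT x z ↔
      ∃ N, dg q hq x N < dg q hq z N ∧ ∀ n, N < n → x.1 n = z.1 n := by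
  constructor
  · rintro ⟨N, helt, hup⟩
    rw [elt_iff] at helt
    exact ⟨N, helt.2, hup⟩
  · rintro ⟨N, hlt, hup⟩
    refine ⟨N, ?_, hup⟩
    rw [elt_iff]
    refine ⟨?_, hlt⟩
    have hx := x.2 N
    have hz := z.2 N
    rw [show (exDiagram q hq).tgt (x.1 N) = (x.1 N).2 from rfl,
      show (exDiagram q hq).src (x.1 (N+1)) = (x.1 (N+1)).1 from rfl] at hx
    rw [show (exDiagram q hq).tgt (z.1 N) = (z.1 N).2 from rfl,
      show (exDiagram q hq).src (z.1 (N+1)) = (z.1 (N+1)).1 from rfl] at hz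
    rw [hx, hz, hup (N+1) (by omega)]

theorem eq_above_dg (x z : (exDiagram q hq).PathSpace) (N n : ℕ)
    (hup : ∀ m, N < m → x.1 m = z.1 m) (h : N < n) : dg q hq x n = dg q hq z n := by
  unfold dg
  rw [hup n h]

/-- trichotomy for eventually-equal distinct paths -/
theorem path_tricho (x z : (exDiagram q hq).PathSpace) (M : ℕ)
    (hne : x ≠ z) (hup : ∀ n, M < n → x.1 n = z.1 n) :
    (exDiagram q hq).pathLT x z ∨ (exDiagram q hq).pathLT z x := by
  classical
  set P : ℕ → Prop := fun n => x.1 n ≠ z.1 n with hP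
  have hex : ∃ n, P n := by
    by_contra hco
    push_neg at hco
    exact hne (Subtype.ext (funext fun n => not_not.mp (hco n)))
  obtain ⟨n₁, hn₁⟩ := hex
  have hn₁M : n₁ ≤ M := by
    by_contra hc
    exact hn₁ (hup n₁ (by omega))
  set N := Nat.findGreatest P M with hN
  have hPN : P N := Nat.findGreatest_spec hn₁M hn₁
  have habove : ∀ n, N < n → x.1 n = z.1 n := by
    intro n hn
    rcases le_or_gt n M with h | h
    · by_contra hc
      exact Nat.findGreatest_is_greatest hn h hc
    · exact hup n h
  -- targets at N agree
  have htgt : (x.1 N).2 = (z.1 N).2 := by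
    have hx := x.2 N
    have hz := z.2 N
    rw [show (exDiagram q hq).tgt (x.1 N) = (x.1 N).2 from rfl,
      show (exDiagram q hq).src (x.1 (N+1)) = (x.1 (N+1)).1 from rfl] at hx
    rw [show (exDiagram q hq).tgt (z.1 N) = (z.1 N).2 from rfl,
      show (exDiagram q hq).src (z.1 (N+1)) = (z.1 (N+1)).1 from rfl] at hz
    rw [hx, hz, habove (N+1) (by omega)]
  have hfst : (x.1 N).1 ≠ (z.1 N).1 := by
    intro hc
    exact hPN (Prod.ext hc htgt)
  have hidx : exVIdx q ((x.1 N).1) ≠ exVIdx q ((z.1 N).1) :=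
    fun hc => hfst (exVIdx_inj q _ _ hc)
  rcases lt_or_gt_of_ne hidx with h | h
  · exact Or.inl ((pathLT_iff q hq x z).mpr ⟨N, h, habove⟩)
  · exact Or.inr ((pathLT_iff q hq z x).mpr ⟨N, h, fun n hn => (habove n hn).symm⟩)

/-- the zero (minimal) path -/
def zeroPath : (exDiagram q hq).PathSpace := mkPath q hq (fun n => mkV q hq n 0)

theorem dg_zeroPath (n : ℕ) : dg q hq (zeroPath q hq) n = 0 := by
  rw [zeroPath, dg_mkPath, mkV_idx_zero]

theorem zeroPath_min : (exDiagram q hq).IsMinPath (zeroPath q hq) :=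
  (isMinPath_iff q hq _).mpr fun n => dg_zeroPath q hq (n+1)

theorem min_unique (y : (exDiagram q hq).PathSpace)
    (h : (exDiagram q hq).IsMinPath y) : y = zeroPath q hq := by
  refine path_ext q hq _ _ fun n => ?_
  rw [dg_zeroPath]
  cases n with
  | zero => exact dg_zero q hq y
  | succ m => exact (isMinPath_iff q hq y).mp h m

def maxPath : (exDiagram q hq).PathSpace := mkPath q hq (fun n => mkV q hq n (match n with | 0 => 0 | m+1 => q (m+1) - 1))

theorem dg_maxPath (n : ℕ) :
    dg q hq (maxPath q hq) (n + 1) = q (n + 1) - 1 := by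
  have h1 : (match n + 1 with | 0 => 0 | m+1 => q (m+1) - 1) = q (n+1) - 1 := rfl
  rw [maxPath, dg_mkPath, mkV_idx_succ q hq n _ (by rw [h1]; have := hq (n+1) (by omega); omega), h1]

theorem maxPath_max : (exDiagram q hq).IsMaxPath (maxPath q hq) :=
  (isMaxPath_iff q hq _).mpr fun n => dg_maxPath q hq n

theorem max_unique (y : (exDiagram q hq).PathSpace)
    (h : (exDiagram q hq).IsMaxPath y) : y = maxPath q hq := by
  refine path_ext q hq _ _ fun n => ?_
  cases n with
  | zero => rw [dg_zero, dg_zero]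
  | succ m => rw [dg_maxPath, (isMaxPath_iff q hq y).mp h m]

theorem ex_proper : (exDiagram q hq).ProperlyOrdered :=
  ⟨⟨zeroPath q hq, zeroPath_min q hq, fun y hy => min_unique q hq y hy⟩,
   ⟨maxPath q hq, maxPath_max q hq, fun y hy => max_unique q hq y hy⟩⟩

theorem ex_simple : (exDiagram q hq).Simple := by
  refine ⟨fun n => n, fun a b h => h, rfl, ?_⟩
  intro l c hlc v w
  have hlc' : l + 1 = c + 1 := hlc
  have hl : l = c := by omega
  subst hl
  classical
  refine ⟨Function.update (fun i => (mkV q hq i 0, mkV q hq (i+1) 0)) l (v, w), ?_, ?_, ?_⟩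
  · intro i h1 h2
    have h2' : i + 1 < l + 1 := h2
    have h1' : l ≤ i := h1
    omega
  · erw [Function.update_self]; rfl
  · erw [Function.update_self]; rfl

variable (q : ℕ → ℕ) (hq : ∀ n : ℕ, 1 ≤ n → 2 ≤ q n)
variable (T : (exDiagram q hq).PathSpace ≃ (exDiagram q hq).PathSpace)

section Succ

theorem exists_nonmax (x : (exDiagram q hq).PathSpace) (hx : ¬ (exDiagram q hq).IsMaxPath x) : ∃ n, 1 ≤ n ∧ dg q hq x n < q n - 1 := by
  by_contra hco
  push_neg at hco
  refine hx ((isMaxPath_iff q hq x).mpr fun n => ?_)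
  have h1 := hco (n+1) (by omega)
  have h2 := dg_lt q hq x n
  omega

/-- the level of the first non-maximal edge -/
noncomputable def lv (x : (exDiagram q hq).PathSpace) (hx : ¬ (exDiagram q hq).IsMaxPath x) : ℕ := Nat.find (exists_nonmax q hq x hx)

theorem lv_pos (x : (exDiagram q hq).PathSpace) (hx : ¬ (exDiagram q hq).IsMaxPath x) : 1 ≤ lv q hq x hx := (Nat.find_spec (exists_nonmax q hq x hx)).1

theorem lv_spec (x : (exDiagram q hq).PathSpace) (hx : ¬ (exDiagram q hq).IsMaxPath x) : dg q hq x (lv q hq x hx) < q (lv q hq x hx) - 1 :=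
  (Nat.find_spec (exists_nonmax q hq x hx)).2

theorem lv_min (x : (exDiagram q hq).PathSpace) (hx : ¬ (exDiagram q hq).IsMaxPath x) (n : ℕ) (h1 : 1 ≤ n) (h2 : n < lv q hq x hx) : dg q hq x n = q n - 1 := by
  have := Nat.find_min (exists_nonmax q hq x hx) h2
  push_neg at this
  have h3 := this h1
  obtain ⟨m, rfl⟩ : ∃ m, n = m + 1 := ⟨n - 1, by omega⟩
  have h4 := dg_lt q hq x m
  omega

/-- the successor path -/
noncomputable def succP (x : (exDiagram q hq).PathSpace) (hx : ¬ (exDiagram q hq).IsMaxPath x) : (exDiagram q hq).PathSpace :=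
  mkPath q hq (fun n =>
    if n < lv q hq x hx then mkV q hq n 0
    else if n = lv q hq x hx then mkV q hq n (dg q hq x n + 1)
    else (x.1 n).1)

theorem dg_succP_below (x : (exDiagram q hq).PathSpace) (hx : ¬ (exDiagram q hq).IsMaxPath x) (n : ℕ) (h : n < lv q hq x hx) :
    dg q hq (succP q hq x hx) n = 0 := by
  rw [succP, dg_mkPath, if_pos h, mkV_idx_zero]

theorem dg_succP_at (x : (exDiagram q hq).PathSpace) (hx : ¬ (exDiagram q hq).IsMaxPath x) :
    dg q hq (succP q hq x hx) (lv q hq x hx) = dg q hq x (lv q hq x hx) + 1 := by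
  rw [succP, dg_mkPath, if_neg (lt_irrefl _), if_pos rfl]
  obtain ⟨m, hm⟩ : ∃ m, lv q hq x hx = m + 1 := ⟨lv q hq x hx - 1, by have := lv_pos q hq x hx; omega⟩
  have hs := lv_spec q hq x hx
  have hqq := hq (lv q hq x hx) (lv_pos q hq x hx)
  rw [hm] at hs hqq ⊢
  rw [mkV_idx_succ q hq m _ (by omega)]

theorem dg_succP_above (x : (exDiagram q hq).PathSpace) (hx : ¬ (exDiagram q hq).IsMaxPath x) (n : ℕ) (h : lv q hq x hx < n) :
    dg q hq (succP q hq x hx) n = dg q hq x n := by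
  rw [succP, dg_mkPath, if_neg (by omega), if_neg (by omega)]
  rfl

theorem succP_edge_above (x : (exDiagram q hq).PathSpace) (hx : ¬ (exDiagram q hq).IsMaxPath x) (n : ℕ) (h : lv q hq x hx < n) :
    (succP q hq x hx).1 n = x.1 n := by
  have hx2 := x.2 n
  rw [show (exDiagram q hq).tgt (x.1 n) = (x.1 n).2 from rfl,
    show (exDiagram q hq).src (x.1 (n+1)) = (x.1 (n+1)).1 from rfl] at hx2
  show ((if n < lv q hq x hx then mkV q hq n 0
    else if n = lv q hq x hx then mkV q hq n (dg q hq x n + 1) else (x.1 n).1),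
    (if n+1 < lv q hq x hx then mkV q hq (n+1) 0
    else if n+1 = lv q hq x hx then mkV q hq (n+1) (dg q hq x (n+1) + 1) else (x.1 (n+1)).1)) = x.1 n
  rw [if_neg (by omega), if_neg (by omega), if_neg (by omega), if_neg (by omega)]
  exact Prod.ext rfl hx2.symm

theorem pathLT_succP (x : (exDiagram q hq).PathSpace) (hx : ¬ (exDiagram q hq).IsMaxPath x) : (exDiagram q hq).pathLT x (succP q hq x hx) := by
  refine (pathLT_iff q hq _ _).mpr ⟨lv q hq x hx, ?_, fun n hn => (succP_edge_above q hq x hx n hn).symm⟩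
  rw [dg_succP_at]
  omega

theorem succP_least (x : (exDiagram q hq).PathSpace) (hx : ¬ (exDiagram q hq).IsMaxPath x) (z : (exDiagram q hq).PathSpace)
    (hz : (exDiagram q hq).pathLT x z) : ¬ (exDiagram q hq).pathLT z (succP q hq x hx) := by
  intro hzs
  obtain ⟨N1, hN1lt, hN1up⟩ := (pathLT_iff q hq _ _).mp hz
  obtain ⟨N2, hN2lt, hN2up⟩ := (pathLT_iff q hq _ _).mp hzs
  set n0 := lv q hq x hx with hn0
  have hN2pos : 1 ≤ N2 := by
    by_contra hc
    have h0 : N2 = 0 := by omega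
    rw [h0, dg_zero, dg_zero] at hN2lt
    omega
  have hN1pos : 1 ≤ N1 := by
    by_contra hc
    have h0 : N1 = 0 := by omega
    rw [h0, dg_zero, dg_zero] at hN1lt
    omega
  -- digits of z agree with succP above N2; digits of x agree with z above N1
  have hzs_dg : ∀ n, N2 < n → dg q hq z n = dg q hq (succP q hq x hx) n :=
    fun n hn => eq_above_dg q hq _ _ N2 n hN2up hn
  have hxz_dg : ∀ n, N1 < n → dg q hq x n = dg q hq z n :=
    fun n hn => eq_above_dg q hq _ _ N1 n hN1up hn
  rcases lt_trichotomy N2 n0 with hc | hc | hc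
  · -- dg succP N2 = 0, so dg z N2 < 0: absurd
    rw [dg_succP_below q hq x hx N2 hc] at hN2lt
    omega
  · -- N2 = n0
    rw [hc] at hN2lt hzs_dg
    rw [dg_succP_at] at hN2lt
    rw [← hn0] at hN2lt
    -- digits of z equal digits of x above n0
    have hzx_above : ∀ n, n0 < n → dg q hq z n = dg q hq x n := by
      intro n hn
      rw [hzs_dg n hn, dg_succP_above q hq x hx n hn]
    rcases lt_trichotomy N1 n0 with hd | hd | hd
    · -- x has max digit at N1, z digit < q N1: contradiction
      have hmax := lv_min q hq x hx N1 hN1pos hd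
      obtain ⟨m, hm⟩ : ∃ m, N1 = m + 1 := ⟨N1 - 1, by omega⟩
      have hzlt : dg q hq z N1 < q N1 := by rw [hm]; exact dg_lt q hq z m
      have hqq := hq N1 hN1pos
      omega
    · rw [hd] at hN1lt
      omega
    · have := hzx_above N1 hd
      omega
  · -- N2 > n0
    have h1 : dg q hq (succP q hq x hx) N2 = dg q hq x N2 := dg_succP_above q hq x hx N2 hc
    rw [h1] at hN2lt
    have hzx_aboveN2 : ∀ n, N2 < n → dg q hq z n = dg q hq x n := by
      intro n hn
      rw [hzs_dg n hn, dg_succP_above q hq x hx n (by omega)]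
    rcases lt_trichotomy N1 N2 with hd | hd | hd
    · rw [hxz_dg N2 hd] at hN2lt
      omega
    · rw [hd] at hN1lt
      omega
    · rw [hzx_aboveN2 N1 hd] at hN1lt
      omega

theorem T_eq_succP (hT : (exDiagram q hq).IsVershik T) (x : (exDiagram q hq).PathSpace) (hx : ¬ (exDiagram q hq).IsMaxPath x) : T x = succP q hq x hx := by
  obtain ⟨hTlt, hTmin⟩ := hT.1 x hx
  by_contra hne
  have h1 : ¬ (exDiagram q hq).pathLT (succP q hq x hx) (T x) :=
    hTmin _ (pathLT_succP q hq x hx)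
  have h2 : ¬ (exDiagram q hq).pathLT (T x) (succP q hq x hx) :=
    succP_least q hq x hx _ hTlt
  obtain ⟨Na, _, hupa⟩ := (pathLT_iff q hq _ _).mp hTlt
  have hups : ∀ n, lv q hq x hx < n → (succP q hq x hx).1 n = x.1 n :=
    fun n hn => succP_edge_above q hq x hx n hn
  have hup : ∀ n, max Na (lv q hq x hx) < n → (T x).1 n = (succP q hq x hx).1 n := by
    intro n hn
    rw [← hupa n (by omega), hups n (by omega)]
  rcases path_tricho q hq _ _ _ (fun hc => hne hc) hup with h | h
  · exact h2 h
  · exact h1 h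

end Succ

theorem T_max (hT : (exDiagram q hq).IsVershik T) : T (maxPath q hq) = zeroPath q hq :=
  min_unique q hq _ (hT.2 _ (maxPath_max q hq))

variable (q : ℕ → ℕ) (hq : ∀ n : ℕ, 1 ≤ n → 2 ≤ q n)

def Qk : ℕ → ℕ
  | 0 => 1
  | k + 1 => Qk k * q (k + 1)

theorem Qk_pos (hq : ∀ n : ℕ, 1 ≤ n → 2 ≤ q n) (k : ℕ) : 0 < Qk q k := by
  induction k with
  | zero => exact Nat.one_pos
  | succ m ih =>
      have := hq (m+1) (by omega)
      have : 0 < q (m+1) := by omega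
      exact Nat.mul_pos ih this

def val (x : (exDiagram q hq).PathSpace) (k : ℕ) : ℕ :=
  ∑ i ∈ Finset.range k, dg q hq x (i + 1) * Qk q i

theorem val_succ (x : (exDiagram q hq).PathSpace) (m : ℕ) :
    val q hq x (m + 1) = val q hq x m + dg q hq x (m + 1) * Qk q m := by
  rw [val, Finset.sum_range_succ]
  rfl

theorem val_lt (x : (exDiagram q hq).PathSpace) (k : ℕ) : val q hq x k < Qk q k := by
  induction k with
  | zero => simp [val, Qk]
  | succ m ih =>
      rw [val_succ]
      have h1 : dg q hq x (m+1) < q (m+1) := dg_lt q hq x m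
      have h4 : Qk q (m+1) = Qk q m * q (m+1) := rfl
      have h5 : 0 < Qk q m := Qk_pos q hq m
      calc val q hq x m + dg q hq x (m+1) * Qk q m
          < Qk q m + dg q hq x (m+1) * Qk q m := by omega
        _ = (dg q hq x (m+1) + 1) * Qk q m := by ring
        _ ≤ q (m+1) * Qk q m := Nat.mul_le_mul (show dg q hq x (m+1) + 1 ≤ q (m+1) by omega) (le_refl (Qk q m))
        _ = Qk q (m+1) := by rw [h4, Nat.mul_comm]

theorem val_digits_eq (x y : (exDiagram q hq).PathSpace) (k : ℕ)
    (h : ∀ i, i < k → dg q hq x (i + 1) = dg q hq y (i + 1)) :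
    val q hq x k = val q hq y k :=
  Finset.sum_congr rfl fun i hi => by rw [h i (Finset.mem_range.mp hi)]

theorem val_inj_digits (x y : (exDiagram q hq).PathSpace) (k : ℕ)
    (h : val q hq x k = val q hq y k) :
    ∀ i, i < k → dg q hq x (i + 1) = dg q hq y (i + 1) := by
  induction k with
  | zero => intro i hi; omega
  | succ m ih =>
      have hx := val_lt q hq x m
      have hy := val_lt q hq y m
      rw [val_succ, val_succ] at h
      -- uniqueness of division
      have hd : dg q hq x (m+1) = dg q hq y (m+1) := by
        rcases Nat.lt_trichotomy (dg q hq x (m+1)) (dg q hq y (m+1)) with hc | hc | hc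
        · exfalso
          have : dg q hq x (m+1) * Qk q m + Qk q m ≤ dg q hq y (m+1) * Qk q m := by
            calc dg q hq x (m+1) * Qk q m + Qk q m = (dg q hq x (m+1) + 1) * Qk q m := by ring
            _ ≤ dg q hq y (m+1) * Qk q m := Nat.mul_le_mul (show dg q hq x (m+1) + 1 ≤ dg q hq y (m+1) by omega) (le_refl (Qk q m))
          omega
        · exact hc
        · exfalso
          have : dg q hq y (m+1) * Qk q m + Qk q m ≤ dg q hq x (m+1) * Qk q m := by
            calc dg q hq y (m+1) * Qk q m + Qk q m = (dg q hq y (m+1) + 1) * Qk q m := by ring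
            _ ≤ dg q hq x (m+1) * Qk q m := Nat.mul_le_mul (show dg q hq y (m+1) + 1 ≤ dg q hq x (m+1) by omega) (le_refl (Qk q m))
          omega
      have hval : val q hq x m = val q hq y m := by rw [hd] at h; omega
      intro i hi
      rcases Nat.lt_or_ge i m with h2 | h2
      · exact ih hval i h2
      · have : i = m := by omega
        subst this
        exact hd

theorem maxsum (j : ℕ) (x : (exDiagram q hq).PathSpace)
    (h : ∀ i, i < j → dg q hq x (i + 1) = q (i + 1) - 1) :
    val q hq x j = Qk q j - 1 := by
  induction j with
  | zero => simp [val, Qk]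
  | succ m ih =>
      rw [val_succ]
      rw [ih (fun i hi => h i (by omega)), h m (by omega)]
      have h4 : Qk q (m+1) = Qk q m * q (m+1) := rfl
      have h5 : 0 < Qk q m := Qk_pos q hq m
      have hqm := hq (m+1) (by omega)
      have h7 : (q (m+1) - 1) * Qk q m = q (m+1) * Qk q m - Qk q m := by
        rw [Nat.sub_mul, Nat.one_mul]
      have h8 : Qk q m * q (m+1) = q (m+1) * Qk q m := Nat.mul_comm _ _
      have h6 : Qk q m ≤ q (m+1) * Qk q m := Nat.le_mul_of_pos_left _ (by omega)
      omega

theorem val_zeroPath (k : ℕ) : val q hq (zeroPath q hq) k = 0 := by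
  unfold val
  refine Finset.sum_eq_zero fun i hi => ?_
  rw [dg_zeroPath]
  simp

theorem val_T (T : (exDiagram q hq).PathSpace ≃ (exDiagram q hq).PathSpace)
    (hT : (exDiagram q hq).IsVershik T) (x : (exDiagram q hq).PathSpace) (k : ℕ) :
    val q hq (T x) k = (val q hq x k + 1) % Qk q k := by
  by_cases hx : (exDiagram q hq).IsMaxPath x
  · have hmax : x = maxPath q hq := max_unique q hq x hx
    subst hmax
    rw [T_max q hq T hT, val_zeroPath]
    rw [maxsum q hq k _ (fun i hi => dg_maxPath q hq i)]
    have := Qk_pos q hq k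
    rw [Nat.sub_add_cancel (by omega), Nat.mod_self]
  · rw [T_eq_succP q hq T hT x hx]
    set n0 := lv q hq x hx with hn0
    have hn0pos := lv_pos q hq x hx
    rcases Nat.lt_or_ge k n0 with hk | hk
    · -- all digits 1..k of succP are 0; x's are max
      have h1 : val q hq (succP q hq x hx) k = 0 := by
        refine Finset.sum_eq_zero fun i hi => ?_
        rw [dg_succP_below q hq x hx (i+1) (by have := Finset.mem_range.mp hi; omega)]
        simp
      have h2 : val q hq x k = Qk q k - 1 :=
        maxsum q hq k x (fun i hi => lv_min q hq x hx (i+1) (by omega) (by omega))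
      have := Qk_pos q hq k
      rw [h1, h2, Nat.sub_add_cancel (by omega), Nat.mod_self]
    · -- k ≥ n0 : val succP = val x + 1 < Qk k
      obtain ⟨t, ht⟩ : ∃ t, k = n0 + t := ⟨k - n0, by omega⟩
      obtain ⟨m, hm⟩ : ∃ m, n0 = m + 1 := ⟨n0 - 1, by omega⟩
      have hsplit : ∀ (z : (exDiagram q hq).PathSpace),
          val q hq z k = val q hq z n0 + ∑ i ∈ Finset.range t, dg q hq z (n0 + i + 1) * Qk q (n0 + i) := by
        intro z
        rw [val, ht, Finset.sum_range_add, ← val]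
      have htail : ∑ i ∈ Finset.range t, dg q hq (succP q hq x hx) (n0 + i + 1) * Qk q (n0 + i)
          = ∑ i ∈ Finset.range t, dg q hq x (n0 + i + 1) * Qk q (n0 + i) := by
        refine Finset.sum_congr rfl fun i hi => ?_
        rw [dg_succP_above q hq x hx (n0 + i + 1) (by omega)]
      have hat : dg q hq (succP q hq x hx) n0 = dg q hq x n0 + 1 := by
        rw [hn0]; exact dg_succP_at q hq x hx
      have hhead_s : val q hq (succP q hq x hx) n0 = (dg q hq x n0 + 1) * Qk q m := by
        rw [hm, val_succ, ← hm]
        have hz : val q hq (succP q hq x hx) m = 0 := by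
          refine Finset.sum_eq_zero fun i hi => ?_
          rw [dg_succP_below q hq x hx (i+1) (by have := Finset.mem_range.mp hi; omega)]
          simp
        rw [hz, hat]
        omega
      have hhead_x : val q hq x n0 = Qk q m - 1 + dg q hq x n0 * Qk q m := by
        rw [hm, val_succ, ← hm]
        rw [maxsum q hq m x (fun i hi => lv_min q hq x hx (i+1) (by omega) (by omega))]
      have hQm := Qk_pos q hq m
      have hval1 : val q hq (succP q hq x hx) k = val q hq x k + 1 := by
        rw [hsplit, hsplit, htail, hhead_s, hhead_x]
        have : (dg q hq x n0 + 1) * Qk q m = dg q hq x n0 * Qk q m + Qk q m := by ring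
        omega
      rw [hval1, Nat.mod_eq_of_lt]
      rw [← hval1]
      exact val_lt q hq _ k

variable (q : ℕ → ℕ) (hq : ∀ n : ℕ, 1 ≤ n → 2 ≤ q n)
variable (T : (exDiagram q hq).PathSpace ≃ (exDiagram q hq).PathSpace)

theorem iterZ_zero (x : (exDiagram q hq).PathSpace) :
    ((exDiagram q hq).iterZ T 0) x = x := by
  show ((T : Equiv.Perm (exDiagram q hq).PathSpace) ^ (0 : ℤ)) x = x
  rw [zpow_zero]
  rfl

theorem iterZ_succ (m : ℤ) (x : (exDiagram q hq).PathSpace) :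
    ((exDiagram q hq).iterZ T (m + 1)) x = T (((exDiagram q hq).iterZ T m) x) := by
  show ((T : Equiv.Perm (exDiagram q hq).PathSpace) ^ (m + 1 : ℤ)) x
    = T (((T : Equiv.Perm (exDiagram q hq).PathSpace) ^ (m : ℤ)) x)
  rw [show (m + 1 : ℤ) = 1 + m by omega, zpow_add, zpow_one]
  rfl

theorem val_iterZ (hT : (exDiagram q hq).IsVershik T) (k : ℕ) (m : ℤ)
    (x : (exDiagram q hq).PathSpace) :
    ((val q hq (((exDiagram q hq).iterZ T m) x) k : ZMod (Qk q k)))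
      = (val q hq x k : ZMod (Qk q k)) + (m : ZMod (Qk q k)) := by
  induction m using Int.induction_on with
  | zero => rw [iterZ_zero]; simp
  | succ i ih =>
      rw [iterZ_succ, val_T q hq T hT]
      rw [ZMod.natCast_mod, Nat.cast_add, Nat.cast_one, ih]
      push_cast
      ring
  | pred i ih =>
      have h1 : ((exDiagram q hq).iterZ T (-(i : ℤ))) x
          = T (((exDiagram q hq).iterZ T (-(i : ℤ) - 1)) x) := by
        rw [← iterZ_succ q hq T (-(i : ℤ) - 1) x]
        norm_num
      rw [h1, val_T q hq T hT, ZMod.natCast_mod, Nat.cast_add, Nat.cast_one] at ih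
      push_cast at ih ⊢
      linear_combination ih - 1

theorem val_eq_of_zmod (hq : ∀ n : ℕ, 1 ≤ n → 2 ≤ q n) (k : ℕ) (a b : ℕ) (ha : a < Qk q k) (hb : b < Qk q k)
    (h : (a : ZMod (Qk q k)) = (b : ZMod (Qk q k))) : a = b := by
  haveI : NeZero (Qk q k) := ⟨(Qk_pos q hq k).ne'⟩
  calc a = (a : ZMod (Qk q k)).val := (ZMod.val_cast_of_lt ha).symm
    _ = (b : ZMod (Qk q k)).val := by rw [h]
    _ = b := ZMod.val_cast_of_lt hb

theorem val_eq_zero_iff (x : (exDiagram q hq).PathSpace) (k : ℕ) :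
    val q hq x k = 0 ↔ ∀ i, i < k → dg q hq x (i + 1) = 0 := by
  constructor
  · intro h i hi
    have := Finset.sum_eq_zero_iff.mp h i (Finset.mem_range.mpr hi)
    rcases Nat.mul_eq_zero.mp this with h' | h'
    · exact h'
    · exact absurd h' (Qk_pos q hq i).ne'
  · intro h
    exact Finset.sum_eq_zero fun i hi => by
      rw [h i (Finset.mem_range.mp hi)]; simp

theorem minSeg_iff (x : (exDiagram q hq).PathSpace) (j : ℕ) :
    (∀ i, i < j + 1 → (exDiagram q hq).IsMinEdge (x.1 i)) ↔ val q hq x j = 0 := by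
  rw [val_eq_zero_iff]
  constructor
  · intro h i hi
    exact (isMinEdge_iff q hq i (x.1 (i+1))).mp (h (i+1) (by omega))
  · intro h i hi
    cases i with
    | zero => exact isMinEdge_zero q hq _
    | succ m => exact (isMinEdge_iff q hq m (x.1 (m+1))).mpr (h m (by omega))

/-- cut characterization: a `(j+1)` cut exists iff the `val`s to level `j` agree -/
theorem cut_iff (hT : (exDiagram q hq).IsVershik T) (j : ℕ)
    (x y : (exDiagram q hq).PathSpace) :
    (exDiagram q hq).HasCut T (j + 1) x y ↔ val q hq x j = val q hq y j := by
  haveI : NeZero (Qk q j) := ⟨(Qk_pos q hq j).ne'⟩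
  constructor
  · rintro ⟨m, hx, hy⟩
    have hvx := (minSeg_iff q hq _ j).mp hx
    have hvy := (minSeg_iff q hq _ j).mp hy
    have h1 := val_iterZ q hq T hT j m x
    have h2 := val_iterZ q hq T hT j m y
    rw [hvx] at h1
    rw [hvy] at h2
    have h3 : (val q hq x j : ZMod (Qk q j)) = (val q hq y j : ZMod (Qk q j)) := by
      have h4 := h1.symm.trans h2
      push_cast at h4
      linear_combination h4
    exact val_eq_of_zmod q hq j _ _ (val_lt q hq x j) (val_lt q hq y j) h3
  · intro h
    have key : ∀ z : (exDiagram q hq).PathSpace,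
        val q hq z j = val q hq x j →
        val q hq (((exDiagram q hq).iterZ T (-(val q hq x j : ℤ))) z) j = 0 := by
      intro z hz
      have h1 := val_iterZ q hq T hT j (-(val q hq x j : ℤ)) z
      rw [hz] at h1
      have h2 : ((val q hq (((exDiagram q hq).iterZ T (-(val q hq x j : ℤ))) z) j : ℕ)
          : ZMod (Qk q j)) = ((0 : ℕ) : ZMod (Qk q j)) := by
        rw [h1]; push_cast; ring
      exact val_eq_of_zmod q hq j _ 0
        (val_lt q hq _ j) (Qk_pos q hq j) h2
    exact ⟨-(val q hq x j : ℤ),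
      (minSeg_iff q hq _ j).mpr (key x rfl),
      (minSeg_iff q hq _ j).mpr (key y h.symm)⟩

theorem edges_eq_iff_digits (x y : (exDiagram q hq).PathSpace) (k : ℕ) :
    (∀ i, i < k → x.1 i = y.1 i) ↔ (∀ i, i < k → dg q hq x (i + 1) = dg q hq y (i + 1)) := by
  constructor
  · intro h i hi
    rw [dg_snd, dg_snd, h i hi]
  · intro h i hi
    have hfst : (x.1 i).1 = (y.1 i).1 := by
      refine exVIdx_inj q _ _ ?_
      cases i with
      | zero =>
          have h1 : ((x.1 0).1 : Fin 1).val = 0 := by omega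
          have h2 : ((y.1 0).1 : Fin 1).val = 0 := by omega
          show exVIdx q (x.1 0).1 = exVIdx q (y.1 0).1
          rw [show exVIdx q (x.1 0).1 = ((x.1 0).1 : Fin 1).val from rfl,
            show exVIdx q (y.1 0).1 = ((y.1 0).1 : Fin 1).val from rfl, h1, h2]
      | succ m => exact h m (by omega)
    have hsnd : (x.1 i).2 = (y.1 i).2 :=
      exVIdx_inj q _ _ (by rw [← dg_snd, ← dg_snd]; exact h i hi)
    exact Prod.ext hfst hsnd

/-- coding characterization -/
theorem sameCoding_iff (hT : (exDiagram q hq).IsVershik T) (k : ℕ)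
    (x y : (exDiagram q hq).PathSpace) :
    (exDiagram q hq).SameCoding T k x y ↔ val q hq x k = val q hq y k := by
  constructor
  · intro h
    refine val_digits_eq q hq x y k ?_
    refine ((edges_eq_iff_digits q hq x y k).mp fun i hi => ?_)
    have := h 0 i hi
    rw [iterZ_zero, iterZ_zero] at this
    exact this
  · intro h m i hi
    have h1 := val_iterZ q hq T hT k m x
    have h2 := val_iterZ q hq T hT k m y
    rw [h] at h1
    have h3 : val q hq (((exDiagram q hq).iterZ T m) x) k
        = val q hq (((exDiagram q hq).iterZ T m) y) k := by
      refine val_eq_of_zmod q hq k _ _ (val_lt q hq _ k) (val_lt q hq _ k) ?_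
      rw [h1, h2]
    exact (edges_eq_iff_digits q hq _ _ k).mpr (val_inj_digits q hq _ _ k h3) i hi

theorem depthPair_iff (hT : (exDiagram q hq).IsVershik T) (k : ℕ)
    (x y : (exDiagram q hq).PathSpace) :
    (exDiagram q hq).DepthPair T k x y ↔
      (val q hq x k = val q hq y k ∧ dg q hq x (k + 1) ≠ dg q hq y (k + 1)) := by
  constructor
  · rintro ⟨hne, hsc, hnsc⟩
    have h1 := (sameCoding_iff q hq T hT k x y).mp hsc
    refine ⟨h1, fun hdg => ?_⟩
    refine hnsc ((sameCoding_iff q hq T hT (k+1) x y).mpr ?_)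
    rw [val_succ, val_succ, h1, hdg]
  · rintro ⟨hval, hdg⟩
    have hne : x ≠ y := fun hc => hdg (by rw [hc])
    refine ⟨hne, (sameCoding_iff q hq T hT k x y).mpr hval, fun hsc => ?_⟩
    have h1 := (sameCoding_iff q hq T hT (k+1) x y).mp hsc
    exact hdg (val_inj_digits q hq x y (k+1) h1 k (by omega))
variable (q : ℕ → ℕ) (hq : ∀ n : ℕ, 1 ≤ n → 2 ≤ q n)
variable (T : (exDiagram q hq).PathSpace ≃ (exDiagram q hq).PathSpace)

theorem part3 (hT : (exDiagram q hq).IsVershik T) (k : ℕ) (hk : 1 ≤ k) :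
    ∃ x y : (exDiagram q hq).PathSpace,
      (exDiagram q hq).DepthPair T k x y ∧ (exDiagram q hq).HasCut T (k + 1) x y := by
  refine ⟨zeroPath q hq, mkPath q hq (fun n => mkV q hq n (if n = k + 1 then 1 else 0)), ?_, ?_⟩
  · refine (depthPair_iff q hq T hT k _ _).mpr ⟨?_, ?_⟩
    · rw [val_zeroPath]
      refine ((val_eq_zero_iff q hq _ k).mpr fun i hi => ?_).symm
      rw [dg_mkPath, if_neg (by omega), mkV_idx_zero]
    · rw [dg_zeroPath, dg_mkPath, if_pos rfl,
        mkV_idx_succ q hq k 1 (by have := hq (k+1) (by omega); omega)]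
      omega
  · refine (cut_iff q hq T hT k _ _).mpr ?_
    rw [val_zeroPath]
    refine ((val_eq_zero_iff q hq _ k).mpr fun i hi => ?_).symm
    rw [dg_mkPath, if_neg (by omega), mkV_idx_zero]

theorem part4 (hT : (exDiagram q hq).IsVershik T) (k : ℕ) (hk : 1 ≤ k)
    (x y : (exDiagram q hq).PathSpace) (h : (exDiagram q hq).DepthPair T k x y) :
    ¬ (exDiagram q hq).HasCut T (k + 2) x y := by
  intro hc
  obtain ⟨hval, hdg⟩ := (depthPair_iff q hq T hT k x y).mp h
  have h1 := (cut_iff q hq T hT (k+1) x y).mp hc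
  exact hdg (val_inj_digits q hq x y (k+1) h1 k (by omega))

end ExProof

/-- The example diagram (one edge between any two vertices at
consecutive levels, `q n ≥ 2` vertices at each level `n ≥ 1`, edges into each
vertex ordered by the index of the source) is simple and properly ordered, and its
Bratteli–Vershik system satisfies: for every `k ≥ 1` there is a depth `k` pair
with a `(k+1)` cut, while no depth `k` pair has a `(k+2)` cut; in particular the
system is untimed but not very untimed. -/
theorem exDiagram_untimed_not_veryUntimed
    (q : ℕ → ℕ) (hq : ∀ n : ℕ, 1 ≤ n → 2 ≤ q n)
    (T : (exDiagram q hq).PathSpace ≃ (exDiagram q hq).PathSpace)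
    (hT : (exDiagram q hq).IsVershik T) :
    (exDiagram q hq).Simple ∧ (exDiagram q hq).ProperlyOrdered ∧
    (∀ k : ℕ, 1 ≤ k → ∃ x y : (exDiagram q hq).PathSpace,
      (exDiagram q hq).DepthPair T k x y ∧ (exDiagram q hq).HasCut T (k + 1) x y) ∧
    (∀ k : ℕ, 1 ≤ k → ∀ x y : (exDiagram q hq).PathSpace,
      (exDiagram q hq).DepthPair T k x y → ¬ (exDiagram q hq).HasCut T (k + 2) x y) ∧
    (exDiagram q hq).Untimed T ∧ ¬ (exDiagram q hq).VeryUntimed T := by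
  refine ⟨ExProof.ex_simple q hq, ExProof.ex_proper q hq,
    fun k hk => ExProof.part3 q hq T hT k hk,
    fun k hk => ExProof.part4 q hq T hT k hk, ?_, ?_⟩
  · intro k hk
    exact ⟨k + 2, by omega, fun x y hd => ExProof.part4 q hq T hT k hk x y hd⟩
  · intro hvu
    obtain ⟨x, y, hd, hcut⟩ := ExProof.part3 q hq T hT 1 le_rfl
    exact hvu 1 le_rfl x y hd hcut
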